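/- The cycle C_{2n} (undirected, each vertex sees its two neighbours) is 3-solvable whenever n ≡ 0 (mod 3); in particular every cycle of length divisible by 6 is 3-solvable. -/

import Mathlib

/-- A directed graph (arc `u → v` meaning `v` sees `u`'s hat) is `q`-solvable if there
are guessing functions, each depending only on the hats the vertex sees, such that
every hat assignment is guessed correctly by some vertex. -/
def HatSolvable {V : Type*} (adj : V → V → Prop) (q : ℕ) : Prop :=
  ∃ f : V → ((V → Fin q) → Fin q),
    (∀ (v : V) (x y : V → Fin q), (∀ u, adj u v → x u = y u) → f v x = f v y) ∧
    ∀ x : V → Fin q, ∃ v, f v x = x v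

namespace EvenCycleAux

/-- Wrongness predicate for an interior `v`-vertex, in difference coordinates. -/
def Fint (a b : ZMod 3) : Prop := (if a + b ≠ 1 then a + b - 1 else a + b + 1) ≠ a
/-- Wrongness predicate for the special `v`-vertex `v_0`. -/
def Fspc (a b : ZMod 3) : Prop := (if a + b ≠ -1 then a + b - 1 else a + b + 1) ≠ a
/-- Wrongness predicate for an interior `w`-vertex. -/
def Gint (b a' : ZMod 3) : Prop := (if (0 : ZMod 3) ≠ (b + a') + 1 then 0 else (0:ZMod 3) - 1) ≠ b
/-- Wrongness predicate for the special `w`-vertex `w_{n-1}`. -/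
def Gspc (b a' : ZMod 3) : Prop := (if (0 : ZMod 3) ≠ b + a' then 0 else (0:ZMod 3) - 1) ≠ b

instance (a b : ZMod 3) : Decidable (Fint a b) := by unfold Fint; infer_instance
instance (a b : ZMod 3) : Decidable (Fspc a b) := by unfold Fspc; infer_instance
instance (a b : ZMod 3) : Decidable (Gint a b) := by unfold Gint; infer_instance
instance (a b : ZMod 3) : Decidable (Gspc a b) := by unfold Gspc; infer_instance

lemma shiftFint (yp xi yi : ZMod 3) :
    ((if yi ≠ yp + 1 then yi - 1 else yi + 1) ≠ xi) ↔ Fint (xi - yp) (yi - xi) := by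
  revert yp xi yi; decide

lemma shiftFspc (yp xi yi : ZMod 3) :
    ((if yi ≠ yp - 1 then yi - 1 else yi + 1) ≠ xi) ↔ Fspc (xi - yp) (yi - xi) := by
  revert yp xi yi; decide

lemma shiftGint (xj yj xn : ZMod 3) :
    ((if xj ≠ xn + 1 then xj else xj - 1) ≠ yj) ↔ Gint (yj - xj) (xn - yj) := by
  revert xj yj xn; decide

lemma shiftGspc (xj yj xn : ZMod 3) :
    ((if xj ≠ xn then xj else xj - 1) ≠ yj) ↔ Gspc (yj - xj) (xn - yj) := by
  revert xj yj xn; decide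

lemma dF1 : ∀ b : ZMod 3, Fint 2 b → b = 0 := by decide
lemma dF2 : ∀ a b : ZMod 3, Fint a b → b ≠ 0 → a ≠ 0 → a = 1 ∧ b = 2 := by decide
lemma dF3 : ∀ a : ZMod 3, Fint a 1 → a = 0 := by decide
lemma dFs1 : ∀ b : ZMod 3, Fspc 0 b → b = 0 := by decide
lemma dFs2 : ∀ a b : ZMod 3, Fspc a b → b ≠ 0 → a ≠ 1 → a = 2 ∧ b = 2 := by decide
lemma dFs3 : ∀ a : ZMod 3, Fspc a 1 → a = 1 := by decide
lemma dG1 : ∀ a : ZMod 3, Gint 0 a → a = 2 := by decide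
lemma dG2 : ∀ a : ZMod 3, Gint 2 a → a ≠ 0 := by decide
lemma dGs1 : ∀ a : ZMod 3, Gspc 0 a → a = 0 := by decide
lemma dGs2 : ∀ a : ZMod 3, Gspc 2 a → a ≠ 1 := by decide
lemma dBne : ∀ b : ZMod 3, b ≠ 0 → b ≠ 2 → b = 1 := by decide

/-- The guessing function of `v_i`. -/
def guessV {n : ℕ} (i : ZMod n) (yp yi : ZMod 3) : ZMod 3 :=
  if i = 0 then (if yi ≠ yp - 1 then yi - 1 else yi + 1)
  else (if yi ≠ yp + 1 then yi - 1 else yi + 1)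

/-- The guessing function of `w_j`. -/
def guessW {n : ℕ} (j : ZMod n) (xj xn : ZMod 3) : ZMod 3 :=
  if j = -1 then (if xj ≠ xn then xj else xj - 1)
  else (if xj ≠ xn + 1 then xj else xj - 1)

/-- Propagation around the cycle. -/
lemma cycle_all {n : ℕ} [NeZero n] {P : ZMod n → Prop}
    (h : ∀ i, P i → P (i + 1)) {i₀ : ZMod n} (h0 : P i₀) : ∀ j, P j := by
  have key : ∀ k : ℕ, P (i₀ + (k : ZMod n)) := by
    intro k
    induction k with
    | zero => simpa using h0
    | succ m ih =>
        have := h _ ih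
        rwa [add_assoc, ← Nat.cast_succ] at this
  intro j
  have := key (j - i₀).val
  rwa [ZMod.natCast_val, ZMod.cast_id, add_sub_cancel] at this

lemma sum_telescope {n : ℕ} [NeZero n] (y : ZMod n → ZMod 3) :
    ∑ i : ZMod n, (y i - y (i - 1)) = 0 := by
  rw [Finset.sum_sub_distrib, sub_eq_zero]
  exact Fintype.sum_equiv (Equiv.addRight (1 : ZMod n)) _ _ (fun i => by simp)

lemma sum_const_case {n : ℕ} [NeZero n] (c0 c : ZMod 3) (f : ZMod n → ZMod 3)
    (h3 : (n : ZMod 3) = 0) (h0 : f 0 = c0) (hi : ∀ i ≠ 0, f i = c) :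
    ∑ i : ZMod n, f i = c0 - c := by
  have key : ∀ i : ZMod n, f i = c + (if i = 0 then c0 - c else 0) := by
    intro i
    by_cases hi0 : i = 0
    · rw [hi0, h0, if_pos rfl]; ring
    · simp [hi0, hi i hi0]
  rw [Finset.sum_congr rfl (fun i _ => key i), Finset.sum_add_distrib, Finset.sum_const,
    Finset.sum_ite_eq' Finset.univ (0 : ZMod n) (fun _ => c0 - c)]
  simp [Finset.card_univ, ZMod.card, h3]

end EvenCycleAux

open EvenCycleAux in
/-- The cycle $C_{2n}$ is 3-solvable when $3 \mid n$ (cycles of length divisible by 6). -/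
theorem even_cycle_three_solvable (n : ℕ) (hn : 1 < n) (h3 : 3 ∣ n) :
    HatSolvable
      (fun a b : ZMod n ⊕ ZMod n =>
        match a, b with
        | .inl i, .inr j => j = i ∨ j = i - 1
        | .inr j, .inl i => j = i ∨ j = i - 1
        | _, _ => False) 3 := by
  haveI : NeZero n := ⟨by omega⟩
  refine ⟨fun v c =>
    match v with
    | .inl i => guessV i (c (.inr (i - 1))) (c (.inr i))
    | .inr j => guessW j (c (.inl j)) (c (.inl (j + 1))),
    ?_, ?_⟩
  · rintro (i | j) c d hcd
    · have h1 : c (.inr i) = d (.inr i) := hcd _ (Or.inl rfl)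
      have h2 : c (.inr (i - 1)) = d (.inr (i - 1)) := hcd _ (Or.inr rfl)
      simp only [h1, h2]
      rfl
    · have h1 : c (.inl j) = d (.inl j) := hcd _ (Or.inl rfl)
      have h2 : c (.inl (j + 1)) = d (.inl (j + 1)) := hcd _ (Or.inr (by ring))
      simp only [h1, h2]
      rfl
  · intro c
    by_contra hcon
    push_neg at hcon
    set x : ZMod n → ZMod 3 := fun i => c (.inl i) with hx
    set y : ZMod n → ZMod 3 := fun i => c (.inr i) with hy
    obtain ⟨a, ha⟩ : ∃ a : ZMod n → ZMod 3, ∀ i, a i = x i - y (i - 1) := ⟨_, fun _ => rfl⟩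
    obtain ⟨b, hb⟩ : ∃ b : ZMod n → ZMod 3, ∀ i, b i = y i - x i := ⟨_, fun _ => rfl⟩
    have hfw : ∀ i : ZMod n, guessV i (y (i - 1)) (y i) ≠ x i := fun i => hcon (.inl i)
    have hgw : ∀ j : ZMod n, guessW j (x j) (x (j + 1)) ≠ y j := fun j => hcon (.inr j)
    -- difference-form wrongness hypotheses
    have hFs : Fspc (a 0) (b 0) := by
      have h0 := hfw 0
      rw [guessV, if_pos rfl] at h0
      rw [ha, hb]
      exact (shiftFspc _ _ _).mp h0
    have hFi : ∀ i : ZMod n, i ≠ 0 → Fint (a i) (b i) := by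
      intro i hi
      have h0 := hfw i
      rw [guessV, if_neg hi] at h0
      rw [ha, hb]
      exact (shiftFint _ _ _).mp h0
    have hGi : ∀ j : ZMod n, j ≠ -1 → Gint (b j) (a (j + 1)) := by
      intro j hj
      have h0 := hgw j
      rw [guessW, if_neg hj] at h0
      rw [ha, hb, add_sub_cancel_right]
      exact (shiftGint _ _ _).mp h0
    have hGs : Gspc (b (-1)) (a 0) := by
      have h0 := hgw (-1)
      rw [guessW, if_pos rfl] at h0
      have h1 := (shiftGspc _ _ _).mp h0
      rw [ha, hb]
      rw [neg_add_cancel] at h1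
      rwa [show (0 : ZMod n) - 1 = -1 from by ring]
    have hne : ∀ i : ZMod n, i + 1 = 0 → i = -1 := fun i h =>
      eq_neg_of_add_eq_zero_left h
    -- total sum is zero
    have hsum : ∑ i : ZMod n, (a i + b i) = 0 := by
      have : ∀ i : ZMod n, a i + b i = y i - y (i - 1) := by
        intro i; rw [ha, hb]; ring
      rw [Finset.sum_congr rfl (fun i _ => this i)]
      exact sum_telescope y
    have hn3 : (n : ZMod 3) = 0 := (ZMod.natCast_eq_zero_iff n 3).mpr h3
    have key : ∀ (c0 cc : ZMod 3), (∀ i : ZMod n, a i + b i = if i = 0 then c0 else cc) →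
        c0 - cc ≠ 0 → False := by
      intro c0 cc hv hd
      have := sum_const_case c0 cc (fun i => a i + b i) hn3
        (by show a 0 + b 0 = c0; rw [hv 0, if_pos rfl])
        (fun i hi => by show a i + b i = cc; rw [hv i, if_neg hi])
      rw [hsum] at this
      exact hd this.symm
    by_cases hA : ∃ i, b i = 0
    · -- Case A : some b is zero; then all b are zero
      obtain ⟨i₀, hi₀⟩ := hA
      have hb0 : ∀ i, b i = 0 := by
        refine cycle_all (fun i hi => ?_) hi₀
        by_cases hsp : i = -1
        · have ha0 : a 0 = 0 := dGs1 _ (by rw [← hsp] at hGs; rwa [hi] at hGs)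
          have : b 0 = 0 := dFs1 _ (by rwa [ha0] at hFs)
          rwa [hsp, neg_add_cancel]
        · have hg := hGi i hsp
          rw [hi] at hg
          have ha1 : a (i + 1) = 2 := dG1 _ hg
          have h10 : i + 1 ≠ 0 := fun h => hsp (hne i h)
          have hf := hFi (i + 1) h10
          rw [ha1] at hf
          exact dF1 _ hf
      have ha0 : a 0 = 0 := dGs1 _ (by rw [hb0] at hGs; exact hGs)
      have hai : ∀ i : ZMod n, i ≠ 0 → a i = 2 := by
        intro i hi
        have him : i - 1 ≠ -1 := fun h => hi (by rw [← sub_add_cancel i 1, h]; ring)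
        have hg := hGi (i - 1) him
        rw [hb0, sub_add_cancel] at hg
        exact dG1 _ hg
      refine key 0 2 (fun i => ?_) (by decide)
      by_cases hi : i = 0
      · rw [hi, ha0, hb0, if_pos rfl]; ring
      · rw [hai i hi, hb0, if_neg hi]; ring
    · push_neg at hA
      by_cases hB : ∃ i, b i = 2
      · -- Case B2 : some b = 2; then all b = 2
        obtain ⟨i₀, hi₀⟩ := hB
        have hb2 : ∀ i, b i = 2 := by
          refine cycle_all (fun i hi => ?_) hi₀
          by_cases hsp : i = -1
          · have ha0 : a 0 ≠ 1 := dGs2 _ (by rw [← hsp] at hGs; rwa [hi] at hGs)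
            have : b 0 = 2 := (dFs2 _ _ hFs (hA 0) ha0).2
            rwa [hsp, neg_add_cancel]
          · have hg := hGi i hsp
            rw [hi] at hg
            have ha1 : a (i + 1) ≠ 0 := dG2 _ hg
            have h10 : i + 1 ≠ 0 := fun h => hsp (hne i h)
            exact (dF2 _ _ (hFi _ h10) (hA _) ha1).2
        have ha0 : a 0 = 2 := by
          have ha1 : a 0 ≠ 1 := dGs2 _ (by rw [hb2] at hGs; exact hGs)
          exact (dFs2 _ _ hFs (hA 0) ha1).1
        have hai : ∀ i : ZMod n, i ≠ 0 → a i = 1 := by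
          intro i hi
          have him : i - 1 ≠ -1 := fun h => hi (by rw [← sub_add_cancel i 1, h]; ring)
          have hg := hGi (i - 1) him
          rw [hb2, sub_add_cancel] at hg
          exact (dF2 _ _ (hFi i hi) (hA i) (dG2 _ hg)).1
        refine key 1 0 (fun i => ?_) (by decide)
        by_cases hi : i = 0
        · rw [hi, ha0, hb2, if_pos rfl]; decide
        · rw [hai i hi, hb2, if_neg hi]; decide
      · -- Case B1 : all b = 1
        push_neg at hB
        have hb1 : ∀ i, b i = 1 := fun i => dBne _ (hA i) (hB i)
        have ha0 : a 0 = 1 := dFs3 _ (by rwa [hb1] at hFs)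
        have hai : ∀ i : ZMod n, i ≠ 0 → a i = 0 := by
          intro i hi
          have := hFi i hi
          rw [hb1] at this
          exact dF3 _ this
        refine key 2 1 (fun i => ?_) (by decide)
        by_cases hi : i = 0
        · rw [hi, ha0, hb1, if_pos rfl]; decide
        · rw [hai i hi, hb1, if_neg hi]; decide
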